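/- arXiv:2211.08091 — 2 statements merged into one kernel-verified Lean document; each statement's English description precedes it below -/
import Mathlib

section
/- If the problem DT_C(v) of reconstructing a digital convex set with vertical X-ray v ∈ ℤ^m (with v_0 ≥ 1 and v_{m-1} ≥ 1) admits a solution contained in the strip [0,m-1]×ℤ, then it admits a solution S whose lowest point in column 0 is the origin (0,0) and whose lowest point in column m-1 has y-coordinate in [0, m-2]. -/
/-- Digital convexity: `S = conv_ℝ²(S) ∩ ℤ²`. -/
def DigitalConvex (S : Finset (ℤ × ℤ)) : Prop :=
  ∀ p : ℤ × ℤ,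
    ((p.1 : ℝ), (p.2 : ℝ)) ∈ convexHull ℝ ((fun q : ℤ × ℤ => ((q.1 : ℝ), (q.2 : ℝ))) '' ↑S) →
    p ∈ S

lemma shear_injective (t a : ℤ) :
    Function.Injective (fun p : ℤ × ℤ => (p.1, p.2 + a + t * p.1)) := by
  intro p q h
  simp only [Prod.mk.injEq] at h
  obtain ⟨h1, h2⟩ := h
  rw [h1] at h2
  exact Prod.ext h1 (by linarith)

lemma shear_digitalConvex (t a : ℤ) (S : Finset (ℤ × ℤ)) (hS : DigitalConvex S) :
    DigitalConvex (S.image (fun p => (p.1, p.2 + a + t * p.1))) := by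
  classical
  set ι : ℤ × ℤ → ℝ × ℝ := fun q => ((q.1 : ℝ), (q.2 : ℝ)) with hι
  set L : (ℝ × ℝ) →ₗ[ℝ] (ℝ × ℝ) :=
    LinearMap.prod (LinearMap.fst ℝ ℝ ℝ)
      ((t : ℝ) • LinearMap.fst ℝ ℝ ℝ + LinearMap.snd ℝ ℝ ℝ) with hL
  set A : (ℝ × ℝ) →ᵃ[ℝ] (ℝ × ℝ) := L.toAffineMap + AffineMap.const ℝ (ℝ × ℝ) (0, (a : ℝ))
    with hA
  have hAval : ∀ x : ℝ × ℝ, A x = (x.1, (t : ℝ) * x.1 + x.2 + (a : ℝ)) := by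
    intro x
    simp [hA, hL, Prod.ext_iff]
  intro p hp
  have hcomm : (ι ∘ fun q : ℤ × ℤ => (q.1, q.2 + a + t * q.1)) = A ∘ ι := by
    funext q
    simp only [Function.comp_apply, hAval, hι, Prod.ext_iff]
    push_cast
    exact ⟨trivial, by ring⟩
  have himg : ι '' ↑(S.image (fun p : ℤ × ℤ => (p.1, p.2 + a + t * p.1)))
      = A '' (ι '' ↑S) := by
    rw [Finset.coe_image, ← Set.image_comp, hcomm, Set.image_comp]
  rw [show ((fun q : ℤ × ℤ => ((q.1 : ℝ), (q.2 : ℝ))) '' _) = ι '' ↑(S.image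
      (fun p : ℤ × ℤ => (p.1, p.2 + a + t * p.1))) from rfl, himg,
    ← AffineMap.image_convexHull] at hp
  obtain ⟨q, hq, hAq⟩ := hp
  have h1 : q.1 = (p.1 : ℝ) := by
    have := congrArg Prod.fst hAq
    simpa [hAval] using this
  have h2 : (t : ℝ) * q.1 + q.2 + (a : ℝ) = (p.2 : ℝ) := by
    have := congrArg Prod.snd hAq
    simpa [hAval] using this
  have hq' : q = ι (p.1, p.2 - a - t * p.1) := by
    apply Prod.ext
    · simpa [hι] using h1
    · simp only [hι]
      push_cast
      rw [h1] at h2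
      linarith
  have hmem : (p.1, p.2 - a - t * p.1) ∈ S := by
    apply hS
    rw [hq'] at hq
    exact hq
  rw [Finset.mem_image]
  exact ⟨(p.1, p.2 - a - t * p.1), hmem, by simp [Prod.ext_iff]; ring⟩

set_option maxHeartbeats 1000000 in
/-- If `DT_C(v)` (with `v_0 ≥ 1`, `v_{m-1} ≥ 1`) admits a digital convex
solution in the strip `[0,m-1] × ℤ`, then it admits a solution whose lowest point in
column `0` is the origin and whose lowest point in column `m-1` has
`y`-coordinate in `[0, m-2]`. -/
theorem exists_normalized_solution (m : ℕ) (hm : 2 ≤ m) (v : Fin m → ℕ)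
    (hv0 : 1 ≤ v ⟨0, by omega⟩) (hvm : 1 ≤ v ⟨m - 1, by omega⟩)
    (h : ∃ S : Finset (ℤ × ℤ), DigitalConvex S ∧
      (∀ p ∈ S, 0 ≤ p.1 ∧ p.1 ≤ (m : ℤ) - 1) ∧
      (∀ i : Fin m, (S.filter (fun p => p.1 = (i : ℤ))).card = v i)) :
    ∃ S : Finset (ℤ × ℤ), DigitalConvex S ∧
      (∀ p ∈ S, 0 ≤ p.1 ∧ p.1 ≤ (m : ℤ) - 1) ∧
      (∀ i : Fin m, (S.filter (fun p => p.1 = (i : ℤ))).card = v i) ∧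
      (((0 : ℤ), (0 : ℤ)) ∈ S ∧ ∀ y : ℤ, ((0 : ℤ), y) ∈ S → 0 ≤ y) ∧
      (∃ y : ℤ, ((m : ℤ) - 1, y) ∈ S ∧ (∀ y' : ℤ, ((m : ℤ) - 1, y') ∈ S → y ≤ y') ∧
        0 ≤ y ∧ y ≤ (m : ℤ) - 2) := by
  classical
  obtain ⟨S, hDC, hbd, hcnt⟩ := h
  -- column 0 and column m-1 are nonempty
  have hc0 : (S.filter (fun p => p.1 = (0 : ℤ))).Nonempty := by
    rw [← Finset.card_pos]
    have := hcnt ⟨0, by omega⟩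
    simp only [Fin.val_mk, Nat.cast_zero] at this
    omega
  have hfeq : ∀ (i : Fin m) (z : ℤ), ((i : ℕ) : ℤ) = z →
      (S.filter (fun p => p.1 = z)).card = v i := by
    intro i z hz
    subst hz
    exact hcnt i
  have hcmcast : (((⟨m - 1, by omega⟩ : Fin m) : ℕ) : ℤ) = (m : ℤ) - 1 := by
    simp only [Fin.val_mk]
    omega
  have hcm : (S.filter (fun p => p.1 = (m : ℤ) - 1)).Nonempty := by
    rw [← Finset.card_pos]
    have := hfeq ⟨m - 1, by omega⟩ ((m : ℤ) - 1) hcmcast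
    omega
  -- lowest y in each column
  set Y0 := (S.filter (fun p => p.1 = (0 : ℤ))).image Prod.snd with hY0
  set Y1 := (S.filter (fun p => p.1 = (m : ℤ) - 1)).image Prod.snd with hY1
  have hY0ne : Y0.Nonempty := hc0.image _
  have hY1ne : Y1.Nonempty := hcm.image _
  set y0 := Y0.min' hY0ne with hy0
  set y1 := Y1.min' hY1ne with hy1
  have hy0mem : ((0 : ℤ), y0) ∈ S := by
    have := Y0.min'_mem hY0ne
    obtain ⟨p, hp, hps⟩ := Finset.mem_image.mp this
    obtain ⟨hpS, hp1⟩ := Finset.mem_filter.mp hp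
    have : p = ((0 : ℤ), y0) := Prod.ext hp1 hps
    rwa [← this]
  have hy0min : ∀ y : ℤ, ((0 : ℤ), y) ∈ S → y0 ≤ y := by
    intro y hy
    apply Finset.min'_le
    exact Finset.mem_image.mpr ⟨((0 : ℤ), y), Finset.mem_filter.mpr ⟨hy, rfl⟩, rfl⟩
  have hy1mem : ((m : ℤ) - 1, y1) ∈ S := by
    have := Y1.min'_mem hY1ne
    obtain ⟨p, hp, hps⟩ := Finset.mem_image.mp this
    obtain ⟨hpS, hp1⟩ := Finset.mem_filter.mp hp
    have : p = ((m : ℤ) - 1, y1) := Prod.ext hp1 hps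
    rwa [← this]
  have hy1min : ∀ y : ℤ, ((m : ℤ) - 1, y) ∈ S → y1 ≤ y := by
    intro y hy
    apply Finset.min'_le
    exact Finset.mem_image.mpr ⟨((m : ℤ) - 1, y), Finset.mem_filter.mpr ⟨hy, rfl⟩, rfl⟩
  -- parameters
  set c : ℤ := y1 - y0 with hc
  set t : ℤ := -(c / ((m : ℤ) - 1)) with ht
  set a : ℤ := -y0 with ha
  set φ : ℤ × ℤ → ℤ × ℤ := fun p => (p.1, p.2 + a + t * p.1) with hφ
  have hm1pos : (0 : ℤ) < (m : ℤ) - 1 := by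
    have : (2 : ℤ) ≤ (m : ℤ) := by exact_mod_cast hm
    omega
  have hkey : c + t * ((m : ℤ) - 1) = c % ((m : ℤ) - 1) := by
    rw [ht, Int.emod_def]
    ring
  refine ⟨S.image φ, shear_digitalConvex t a S hDC, ?_, ?_, ⟨?_, ?_⟩, ?_⟩
  · intro p hp
    obtain ⟨q, hq, hqp⟩ := Finset.mem_image.mp hp
    have h1 : q.1 = p.1 := by
      rw [← hqp]
    rw [← h1]
    exact hbd q hq
  · intro i
    have : (S.image φ).filter (fun p => p.1 = (i : ℤ))
        = (S.filter (fun p => p.1 = (i : ℤ))).image φ := by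
      ext p
      simp only [Finset.mem_filter, Finset.mem_image, hφ]
      constructor
      · rintro ⟨⟨q, hq, rfl⟩, hp1⟩
        exact ⟨q, ⟨hq, hp1⟩, rfl⟩
      · rintro ⟨q, ⟨hqS, hq1⟩, rfl⟩
        exact ⟨⟨q, hqS, rfl⟩, hq1⟩
    rw [this, Finset.card_image_of_injective _ (shear_injective t a), hcnt]
  · rw [Finset.mem_image]
    refine ⟨((0 : ℤ), y0), hy0mem, ?_⟩
    simp [hφ, ha]
  · intro y hy
    obtain ⟨q, hq, hqp⟩ := Finset.mem_image.mp hy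
    simp only [hφ, Prod.mk.injEq] at hqp
    obtain ⟨h1, h2⟩ := hqp
    have hq2 : y0 ≤ q.2 := by
      apply hy0min
      have : q = ((0 : ℤ), q.2) := Prod.ext h1 rfl
      rwa [← this]
    rw [h1] at h2
    omega
  · refine ⟨c % ((m : ℤ) - 1), ?_, ?_, Int.emod_nonneg c (by omega),
      by have := Int.emod_lt_of_pos c hm1pos; omega⟩
    · rw [Finset.mem_image]
      refine ⟨((m : ℤ) - 1, y1), hy1mem, ?_⟩
      have : y1 + a + t * ((m : ℤ) - 1) = c % ((m : ℤ) - 1) := by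
        rw [← hkey, hc, ha]; ring
      simp only [hφ]
      exact Prod.ext rfl this
    · intro y' hy'
      obtain ⟨q, hq, hqp⟩ := Finset.mem_image.mp hy'
      simp only [hφ, Prod.mk.injEq] at hqp
      obtain ⟨h1, h2⟩ := hqp
      have hq2 : y1 ≤ q.2 := by
        apply hy1min
        have : q = ((m : ℤ) - 1, q.2) := Prod.ext h1 rfl
        rwa [← this]
      rw [h1] at h2
      have : c + t * ((m : ℤ) - 1) ≤ y' := by
        rw [hc, ha] at *
        omega
      omega
end

section
/- Let S be a digital convex set contained in [0,m-1]×ℤ with vertical X-ray v, such that (0,0) is the lowest point of S in column 0 and the lowest point in column m-1 has y-coordinate in [0,m-2]. Then any point (i,y) ∈ S has vertical distance at most v_i - 1 to the triangle T_m with vertices (0,0), (m-1,0), (m-1,m-1). -/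
lemma seg_mem {x u w z : ℝ} (h1 : u ≤ z) (h2 : z ≤ w) :
    (x, z) ∈ segment ℝ (x, u) (x, w) := by
  rcases eq_or_lt_of_le (h1.trans h2) with h | h
  · have hz : z = u := le_antisymm (h ▸ h2) h1
    subst hz
    exact left_mem_segment ℝ _ _
  · refine ⟨(w - z) / (w - u), (z - u) / (w - u), ?_, ?_, ?_, ?_⟩
    · exact div_nonneg (by linarith) (by linarith)
    · exact div_nonneg (by linarith) (by linarith)
    · have hne : w - u ≠ 0 := sub_ne_zero.mpr (ne_of_gt h)
      field_simp; ring
    · have hwu : w - u ≠ 0 := by linarith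
      simp only [Prod.ext_iff, Prod.smul_mk, Prod.mk_add_mk, smul_eq_mul]
      constructor
      · field_simp; ring
      · field_simp; ring

lemma mem_hull3 {A B C P : ℝ × ℝ} {a b c : ℝ} (ha : 0 ≤ a) (hb : 0 ≤ b) (hc : 0 ≤ c)
    (habc : a + b + c = 1) (hP : a • A + b • B + c • C = P) :
    P ∈ convexHull ℝ ({A, B, C} : Set (ℝ × ℝ)) := by
  have h := (convex_convexHull ℝ ({A, B, C} : Set (ℝ × ℝ))).sum_mem
    (t := (Finset.univ : Finset (Fin 3))) (w := ![a, b, c]) (z := ![A, B, C])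
    (by intro j _; fin_cases j <;> simpa)
    (by simp [Fin.sum_univ_three, habc])
    (by intro j _; fin_cases j <;> simp [subset_convexHull ℝ ({A,B,C} : Set (ℝ×ℝ)) (by simp : A ∈ _),
          subset_convexHull ℝ ({A,B,C} : Set (ℝ×ℝ)) (by simp : B ∈ _),
          subset_convexHull ℝ ({A,B,C} : Set (ℝ×ℝ)) (by simp : C ∈ _)])
  simpa [Fin.sum_univ_three, hP] using h

/-- For a digital convex set `S ⊆ [0,m-1] × ℤ` with vertical X-ray `v`,
whose lowest point in column `0` is the origin and whose lowest point in column `m-1`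
has `y`-coordinate in `[0, m-2]`, every point `(i,y) ∈ S` is at vertical distance at most
`v_i - 1` from the triangle `T_m` with vertices `(0,0)`, `(m-1,0)`, `(m-1,m-1)`. -/
theorem vertical_distance_to_triangle (m : ℕ) (hm : 2 ≤ m) (v : Fin m → ℕ)
    (S : Finset (ℤ × ℤ)) (hconv : DigitalConvex S)
    (hstrip : ∀ p ∈ S, 0 ≤ p.1 ∧ p.1 ≤ (m : ℤ) - 1)
    (hxray : ∀ i : Fin m, (S.filter (fun p => p.1 = (i : ℤ))).card = v i)
    (h0 : ((0 : ℤ), (0 : ℤ)) ∈ S ∧ ∀ y : ℤ, ((0 : ℤ), y) ∈ S → 0 ≤ y)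
    (hm1 : ∃ y : ℤ, ((m : ℤ) - 1, y) ∈ S ∧ (∀ y' : ℤ, ((m : ℤ) - 1, y') ∈ S → y ≤ y') ∧
      0 ≤ y ∧ y ≤ (m : ℤ) - 2) :
    ∀ i : Fin m, ∀ y : ℤ, ((i : ℤ), y) ∈ S →
      ∃ y' : ℝ, (((i : ℤ) : ℝ), y') ∈
          convexHull ℝ ({((0 : ℝ), (0 : ℝ)), ((m : ℝ) - 1, 0), ((m : ℝ) - 1, (m : ℝ) - 1)} :
            Set (ℝ × ℝ)) ∧
        |(y : ℝ) - y'| ≤ (v i : ℝ) - 1 := by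
  intro i y hyS
  obtain ⟨ys, hysS, _, hys0, hysle⟩ := hm1
  set xR : ℝ := ((i : ℤ) : ℝ) with hxR
  have hmR : (2 : ℝ) ≤ (m : ℝ) := by exact_mod_cast hm
  have hMpos : (0 : ℝ) < (m : ℝ) - 1 := by linarith
  have hiZ : (i : ℤ) < (m : ℤ) := by exact_mod_cast i.isLt
  have hiZ0 : (0 : ℤ) ≤ (i : ℤ) := by positivity
  have hx0 : (0 : ℝ) ≤ xR := by rw [hxR]; exact_mod_cast hiZ0
  have hiM : (i : ℤ) ≤ (m : ℤ) - 1 := by omega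
  have hxM : xR ≤ (m : ℝ) - 1 := by rw [hxR]; exact_mod_cast hiM
  have hysR0 : (0 : ℝ) ≤ (ys : ℝ) := by exact_mod_cast hys0
  have hysRle : (ys : ℝ) ≤ (m : ℝ) - 2 := by exact_mod_cast hysle
  set t : ℝ := xR * (ys : ℝ) / ((m : ℝ) - 1) with ht
  have ht0 : 0 ≤ t := by
    apply div_nonneg (mul_nonneg hx0 hysR0) (le_of_lt hMpos)
  have hti : t ≤ xR := by
    rw [ht, div_le_iff₀ hMpos]
    have : (ys : ℝ) ≤ (m : ℝ) - 1 := by linarith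
    nlinarith
  -- membership of (xR, t) in the convex hull of the image of S
  set img := (fun q : ℤ × ℤ => ((q.1 : ℝ), (q.2 : ℝ))) '' (↑S : Set (ℤ × ℤ)) with himg
  have h00 : ((0 : ℝ), (0 : ℝ)) ∈ img := ⟨(0, 0), h0.1, by simp⟩
  have hMy : (((m : ℝ) - 1), (ys : ℝ)) ∈ img := ⟨((m : ℤ) - 1, ys), hysS, by push_cast; rfl⟩
  have hA : (xR, t) ∈ convexHull ℝ img := by
    have hc0 : (0 : ℝ) ≤ xR / ((m : ℝ) - 1) := div_nonneg hx0 (le_of_lt hMpos)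
    have hc1 : xR / ((m : ℝ) - 1) ≤ 1 := by
      rw [div_le_one hMpos]; exact hxM
    have hseg : (xR, t) ∈ segment ℝ (((0:ℝ)), (0:ℝ)) (((m : ℝ) - 1), (ys : ℝ)) := by
      refine ⟨1 - xR / ((m : ℝ) - 1), xR / ((m : ℝ) - 1), by linarith, hc0, by ring, ?_⟩
      have hne : (m : ℝ) - 1 ≠ 0 := ne_of_gt hMpos
      simp only [Prod.ext_iff, Prod.smul_mk, Prod.mk_add_mk, smul_eq_mul]
      constructor
      · field_simp; ring
      · rw [ht]; field_simp; ring
    exact (convex_convexHull ℝ img).segment_subset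
      (subset_convexHull ℝ img h00) (subset_convexHull ℝ img hMy) hseg
  have hY : (xR, (y : ℝ)) ∈ convexHull ℝ img :=
    subset_convexHull ℝ img ⟨((i : ℤ), y), hyS, rfl⟩
  -- all integer points vertically between t and y are in S
  have hmemS : ∀ z : ℤ, min t (y : ℝ) ≤ (z : ℝ) → (z : ℝ) ≤ max t (y : ℝ) →
      ((i : ℤ), z) ∈ S := by
    intro z h1 h2
    rcases le_total t (y : ℝ) with h | h
    · have hmn : min t (y : ℝ) = t := min_eq_left h
      have hmx : max t (y : ℝ) = (y : ℝ) := max_eq_right h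
      rw [hmn] at h1; rw [hmx] at h2
      exact hconv ((i : ℤ), z)
        ((convex_convexHull ℝ img).segment_subset hA hY (seg_mem h1 h2))
    · have hmn : min t (y : ℝ) = (y : ℝ) := min_eq_right h
      have hmx : max t (y : ℝ) = t := max_eq_left h
      rw [hmn] at h1; rw [hmx] at h2
      exact hconv ((i : ℤ), z)
        ((convex_convexHull ℝ img).segment_subset hY hA (seg_mem h1 h2))
  -- counting
  have hcount : ∀ a b : ℤ, a ≤ b → (∀ z, a ≤ z → z ≤ b → ((i : ℤ), z) ∈ S) →
      b - a + 1 ≤ (v i : ℤ) := by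
    intro a b hab hz
    have hsubset : (Finset.Icc a b).image (fun z => ((i : ℤ), z)) ⊆
        S.filter (fun p => p.1 = (i : ℤ)) := by
      intro p hp
      simp only [Finset.mem_image, Finset.mem_Icc] at hp
      obtain ⟨z, ⟨hz1, hz2⟩, rfl⟩ := hp
      exact Finset.mem_filter.mpr ⟨hz z hz1 hz2, rfl⟩
    have hcard := Finset.card_le_card hsubset
    rw [Finset.card_image_of_injective _ (fun a b h => congrArg Prod.snd h),
      hxray i, Int.card_Icc] at hcard
    omega
  have hv1 : 1 ≤ v i := by
    rw [← hxray i]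
    exact Finset.card_pos.mpr ⟨((i : ℤ), y), by simp [Finset.mem_filter, hyS]⟩
  -- triangle membership helper
  have htri : ∀ y' : ℝ, 0 ≤ y' → y' ≤ xR → (xR, y') ∈
      convexHull ℝ ({((0 : ℝ), (0 : ℝ)), ((m : ℝ) - 1, 0), ((m : ℝ) - 1, (m : ℝ) - 1)} :
        Set (ℝ × ℝ)) := by
    intro y' h1 h2
    have hne : (m : ℝ) - 1 ≠ 0 := ne_of_gt hMpos
    apply mem_hull3 (a := 1 - xR / ((m : ℝ) - 1)) (b := (xR - y') / ((m : ℝ) - 1))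
      (c := y' / ((m : ℝ) - 1))
    · have : xR / ((m : ℝ) - 1) ≤ 1 := by rw [div_le_one hMpos]; exact hxM
      linarith
    · exact div_nonneg (by linarith) (le_of_lt hMpos)
    · exact div_nonneg h1 (le_of_lt hMpos)
    · field_simp; ring
    · simp only [Prod.ext_iff, Prod.smul_mk, Prod.mk_add_mk, smul_eq_mul]
      constructor
      · field_simp; ring
      · field_simp; ring
  rcases lt_or_ge y 0 with hy0 | hy0
  · -- y < 0 : take y' = 0
    refine ⟨0, htri 0 le_rfl hx0, ?_⟩
    have hbd : 0 - y + 1 ≤ (v i : ℤ) := by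
      apply hcount y 0 (le_of_lt hy0)
      intro z hz1 hz2
      apply hmemS z
      · exact le_trans (min_le_right _ _) (by exact_mod_cast hz1)
      · refine le_trans ?_ (le_max_left _ _)
        have : (z : ℝ) ≤ 0 := by exact_mod_cast hz2
        linarith
    have hbdR : 0 - (y : ℝ) + 1 ≤ (v i : ℝ) := by exact_mod_cast hbd
    rw [sub_zero, abs_of_neg (by exact_mod_cast hy0 : (y : ℝ) < 0)]
    linarith
  · rcases le_or_gt y (i : ℤ) with hyi | hyi
    · -- 0 ≤ y ≤ i : take y' = y
      refine ⟨(y : ℝ), htri (y : ℝ) (by exact_mod_cast hy0) (by rw [hxR]; exact_mod_cast hyi), ?_⟩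
      simp only [sub_self, abs_zero]
      have : (1 : ℝ) ≤ (v i : ℝ) := by exact_mod_cast hv1
      linarith
    · -- y > i : take y' = xR
      refine ⟨xR, htri xR hx0 le_rfl, ?_⟩
      have hbd : y - (i : ℤ) + 1 ≤ (v i : ℤ) := by
        apply hcount (i : ℤ) y (le_of_lt hyi)
        intro z hz1 hz2
        apply hmemS z
        · refine le_trans (min_le_left _ _) (le_trans hti ?_)
          rw [hxR]; exact_mod_cast hz1
        · exact le_trans (by exact_mod_cast hz2) (le_max_right _ _)
      have hbdR : (y : ℝ) - xR + 1 ≤ (v i : ℝ) := by rw [hxR]; exact_mod_cast hbd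
      rw [abs_of_nonneg (by
        have : xR < (y : ℝ) := by rw [hxR]; exact_mod_cast hyi
        linarith)]
      linarith
end
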